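/- For every d×d matrix E with tr E = 0 and every δ ∈ (0,1), there exists a vector field u_E ∈ H¹_0(B_{1+δ/2})^d with div u_E = 0 in B_{1+δ/2}, u_E(x) = −Ex for x in the unit ball B, and ‖∇u_E‖_{L²(B_{1+δ/2})} ≤ C(d,δ)·|E|. -/

import Mathlib

open MeasureTheory Metric Filter Topology Set Matrix
open scoped ENNReal NNReal

noncomputable section

namespace StokesSuspension

/-- Ambient Euclidean space `ℝ^d`. -/
abbrev V (d : ℕ) := EuclideanSpace ℝ (Fin d)

/-- `d × d` real matrices. -/
abbrev Mat (d : ℕ) := Matrix (Fin d) (Fin d) ℝ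

variable {d : ℕ}

/-- `C^∞` smoothness exponent. -/
def Cinf : WithTop ℕ∞ := (⊤ : ℕ∞)

/-- Reinterpret a plain function `Fin d → ℝ` as a vector of `ℝ^d`. -/
def toV (v : Fin d → ℝ) : V d := WithLp.toLp 2 v

/-- `j`-th coordinate vector. -/
def ebasis (d : ℕ) (j : Fin d) : V d := EuclideanSpace.single j 1

/-- Partial derivative `∂_j u` of a scalar field. -/
def pd (u : V d → ℝ) (x : V d) (j : Fin d) : ℝ := fderiv ℝ u x (ebasis d j)

/-- Second partial derivative `∂_k ∂_j u`. -/
def pd2 (u : V d → ℝ) (x : V d) (j k : Fin d) : ℝ := pd (fun y => pd u y j) x k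

/-- Gradient matrix `(∇u)_{ij} = ∂_j u_i` of a vector field. -/
def gradM (u : V d → V d) (x : V d) : Mat d :=
  Matrix.of fun i j => pd (fun y => u y i) x j

/-- Symmetrized gradient `D(u)`. -/
def symGrad (u : V d → V d) (x : V d) : Mat d :=
  (2:ℝ)⁻¹ • (gradM u x + (gradM u x)ᵀ)

/-- Divergence of a vector field. -/
def divg (u : V d → V d) (x : V d) : ℝ := (gradM u x).trace

/-- Frobenius inner product of matrices `A : B`. -/
def matInner (A B : Mat d) : ℝ := ∑ i, ∑ j, A i j * B i j

/-- Squared Frobenius norm of a matrix. -/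
def mnormSq (A : Mat d) : ℝ := matInner A A

/-- Squared norm `|∇²u|²` of the second gradient of a vector field. -/
def hessSq (u : V d → V d) (x : V d) : ℝ :=
  ∑ i, ∑ j, ∑ k, (pd2 (fun y => u y i) x j k)^2

/-- Squared norm `|∇p|²` of the gradient of a scalar field. -/
def gradSq (p : V d → ℝ) (x : V d) : ℝ := ∑ j, (pd p x j)^2

/-- Symmetric trace-free matrices `𝕄₀^sym`. -/
def IsSymTF (E : Mat d) : Prop := Eᵀ = E ∧ E.trace = 0

/-- Skew-symmetric matrices `𝕄^skew`. -/
def IsSkew (E : Mat d) : Prop := Eᵀ = -E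

/-- Matrix acting on a vector of `ℝ^d`. -/
def mulv (A : Mat d) (x : V d) : V d := toV (A.mulVec fun j => x j)

/-- `u` coincides on `A` with a rigid motion `x ↦ κ + Θ x`, `Θ` skew-symmetric. -/
def IsRigidOn (u : V d → V d) (A : Set (V d)) : Prop :=
  ∃ κ : V d, ∃ Θ : Mat d, IsSkew Θ ∧ ∀ x ∈ A, u x = κ + mulv Θ x

/-- Cauchy stress tensor `σ(u,P) = 2 D(u) − P Id`. -/
def stress (u : V d → V d) (P : V d → ℝ) (x : V d) : Mat d :=
  (2:ℝ) • symGrad u x - P x • (1 : Mat d)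

/-- Vanishing of the net force `∫_{∂B(c,r)} σ(u,P)ν` on the sphere `∂B(c,r)`
(with respect to the `(d−1)`-dimensional Hausdorff surface measure; the
normalization of `ν ∝ x − c` is irrelevant for the vanishing). -/
def ForceFree (u : V d → V d) (P : V d → ℝ) (c : V d) (r : ℝ) : Prop :=
  ∫ x in sphere c r, mulv (stress u P x) (x - c) ∂μH[((d:ℝ) - 1)] = (0 : V d)

/-- Vanishing of the net torque `∫_{∂B(c,r)} Θ(x−c) · σ(u,P)ν` for all skew `Θ`. -/
def TorqueFree (u : V d → V d) (P : V d → ℝ) (c : V d) (r : ℝ) : Prop :=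
  ∀ Θ : Mat d, IsSkew Θ →
    ∫ x in sphere c r,
      (∑ i, mulv Θ (x - c) i * mulv (stress u P x) (x - c) i) ∂μH[((d:ℝ) - 1)] = 0

/-- The random geometric setting: a stationary ergodic point process,
the hardcore condition, on a probability space with an ergodic
measure-preserving action of `(ℝ^d,+)`. -/
structure Setting (d : ℕ) (Ω : Type) [MeasureSpace Ω] where
  /-- the measurable action of the translation group -/
  τ : V d → Ω → Ω
  /-- the random points -/
  xp : ℕ → Ω → V d
  /-- the hardcore parameter -/
  δ : ℝ
  hδ : 0 < δ ∧ δ < 1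
  τ_add : ∀ x y ω, τ x (τ y ω) = τ (x + y) ω
  τ_zero : ∀ ω, τ 0 ω = ω
  τ_measPres : ∀ x, MeasurePreserving (τ x) volume volume
  τ_jointMeas : Measurable fun p : V d × Ω => τ p.1 p.2
  ergodic : ∀ A : Set Ω, MeasurableSet A → (∀ x, τ x ⁻¹' A = A) →
      volume A = 0 ∨ volume A = 1
  xp_meas : ∀ n, Measurable (xp n)
  stat : ∀ y ω, (Set.range fun n => xp n (τ y ω)) = (fun z => y + z) '' Set.range fun n => xp n ω
  hardcore : ∀ᵐ ω ∂volume, ∀ m n : ℕ, m ≠ n → 2 + δ < dist (xp m ω) (xp n ω)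

variable {Ω : Type} [MeasureSpace Ω]

/-- The inclusion set `𝓘^ω = ⋃ₙ B(xₙ^ω)`. -/
def incl (S : Setting d Ω) (ω : Ω) : Set (V d) := ⋃ n, ball (S.xp n ω) 1

/-- Indices `n` with `ε(Iₙ^ω + δB) ⊆ U`. -/
def NsetEps (S : Setting d Ω) (U : Set (V d)) (ε : ℝ) (ω : Ω) : Set ℕ :=
  {n | ∀ y ∈ ball (S.xp n ω) (1 + S.δ), ε • y ∈ U}

/-- Rescaled inclusion set `𝓘_ε^ω(U)`. -/
def inclEps (S : Setting d Ω) (U : Set (V d)) (ε : ℝ) (ω : Ω) : Set (V d) :=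
  ⋃ n ∈ NsetEps S U ε ω, ball (ε • S.xp n ω) ε

/-- The pressure extended by `0` on the inclusions: `Σ · 𝟙_{ℝ^d ∖ 𝓘}`. -/
def pressInd (S : Setting d Ω) (Sp : Ω → V d → ℝ) (ω : Ω) (x : V d) : ℝ :=
  (incl S ω)ᶜ.indicator (Sp ω) x

/-- The corrector `(ψ_E, Σ_E)` for the Stokes corrector equation:
almost sure realization properties (local Sobolev regularity, smoothness off the
inclusions, divergence-free, rigidity `D(ψ_E + Ex) = 0` on the inclusions, the
weak formulation of `−Δψ_E + ∇Σ_E = 0` with no-force and no-torque boundary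
conditions), stationarity of `∇ψ_E` and `Σ_E 𝟙_{ℝ^d∖𝓘}` with vanishing
expectations and finite second moments, and the anchoring `∫_B ψ_E = 0`. -/
structure IsCorrector (S : Setting d Ω) (E : Mat d)
    (ψ : Ω → V d → V d) (Sp : Ω → V d → ℝ) : Prop where
  mem_loc : ∀ᵐ ω ∂volume, ∀ R : ℝ, MemLp (ψ ω) 2 (volume.restrict (ball 0 R)) ∧
      ∀ i j, MemLp (fun x => gradM (ψ ω) x i j) 2 (volume.restrict (ball 0 R))
  mem_press : ∀ᵐ ω ∂volume, ∀ R : ℝ,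
      MemLp (Sp ω) 2 (volume.restrict (ball 0 R \ incl S ω))
  smooth : ∀ᵐ ω ∂volume, ContDiffOn ℝ Cinf (ψ ω) (closure (incl S ω))ᶜ ∧
      ContDiffOn ℝ Cinf (Sp ω) (closure (incl S ω))ᶜ
  div_zero : ∀ᵐ ω ∂volume, ∀ x ∈ (closure (incl S ω))ᶜ, divg (ψ ω) x = 0
  rigid : ∀ᵐ ω ∂volume, ∀ n : ℕ, ∃ κ : V d, ∃ Θ : Mat d, IsSkew Θ ∧
      ∀ x ∈ closedBall (S.xp n ω) 1, ψ ω x + mulv E x = κ + mulv Θ x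
  eqn : ∀ᵐ ω ∂volume, ∀ φ : V d → V d, ContDiff ℝ Cinf φ → HasCompactSupport φ →
      (∀ x ∈ incl S ω, symGrad φ x = 0) →
      (∫ x, matInner (gradM (ψ ω) x) (gradM φ x))
        - (∫ x in (incl S ω)ᶜ, Sp ω x * divg φ x) = 0
  force : ∀ᵐ ω ∂volume, ∀ n : ℕ,
      ForceFree (fun x => ψ ω x + mulv E x) (Sp ω) (S.xp n ω) 1
  torque : ∀ᵐ ω ∂volume, ∀ n : ℕ,
      TorqueFree (fun x => ψ ω x + mulv E x) (Sp ω) (S.xp n ω) 1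
  stat_grad : ∀ (x y : V d) (ω : Ω), gradM (ψ ω) (x + y) = gradM (ψ (S.τ (-y) ω)) x
  stat_press : ∀ (x y : V d) (ω : Ω), pressInd S Sp ω (x + y) = pressInd S Sp (S.τ (-y) ω) x
  mean_grad : ∀ i j, ∫ ω, gradM (ψ ω) 0 i j ∂volume = 0
  mean_press : ∫ ω, pressInd S Sp ω 0 ∂volume = 0
  sq_int : Integrable (fun ω => mnormSq (gradM (ψ ω) 0)) volume ∧
      Integrable (fun ω => (pressInd S Sp ω 0)^2) volume
  anchor : ∀ᵐ ω ∂volume, ∫ x in ball (0:V d) 1, ψ ω x = (0 : V d)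

/-- `(u_ε^ω, P_ε^ω)` is a weak solution of the suspension Stokes problem in `U`:
`u ∈ H¹₀(U)^d` (extended by zero), divergence-free, rigid on each inclusion,
pressure in `L²(U∖𝓘_ε(U))` with zero average, and the weak formulation of the
system (which encodes `−Δu + ∇P = f` in the fluid domain together with the
no-force and no-torque balances on each particle) tested against smooth fields
that are rigid on the inclusions. -/
structure IsSuspSol (S : Setting d Ω) (U : Set (V d)) (f : V d → V d)
    (ε : ℝ) (ω : Ω) (u : V d → V d) (P : V d → ℝ) : Prop where
  mem_u : MemLp u 2 (volume.restrict U)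
  mem_grad : ∀ i j, MemLp (fun x => gradM u x i j) 2 (volume.restrict U)
  zero_out : ∀ x ∉ U, u x = 0
  smooth_fluid : ContDiffOn ℝ Cinf u (U \ closure (inclEps S U ε ω))
  div_zero : ∀ x ∈ U \ closure (inclEps S U ε ω), divg u x = 0
  rigid : ∀ n ∈ NsetEps S U ε ω, IsRigidOn u (ball (ε • S.xp n ω) ε)
  mem_P : MemLp P 2 (volume.restrict (U \ inclEps S U ε ω))
  P_avg : ∫ x in U \ inclEps S U ε ω, P x = 0
  weak_form : ∀ φ : V d → V d, ContDiff ℝ Cinf φ → HasCompactSupport φ → tsupport φ ⊆ U →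
      (∀ x ∈ inclEps S U ε ω, symGrad φ x = 0) →
      (∫ x in U, matInner (gradM u x) (gradM φ x))
        - (∫ x in U \ inclEps S U ε ω, P x * divg φ x)
        = ∫ x in U \ inclEps S U ε ω, ∑ i, f x i * φ x i

/-- `B̄` is the effective viscosity associated with the correctors `ψ`:
a symmetric linear map with `E : B̄E = 𝔼[|D(ψ_E) + E|²]` on `𝕄₀^sym`. -/
def IsEffVisc (S : Setting d Ω) (ψ : Mat d → Ω → V d → V d)
    (Bbar : Mat d → Mat d) : Prop :=
  IsLinearMap ℝ Bbar ∧ (∀ E E' : Mat d, matInner E' (Bbar E) = matInner E (Bbar E')) ∧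
  ∀ E : Mat d, IsSymTF E →
    matInner E (Bbar E) = ∫ ω, mnormSq (symGrad (ψ E ω) 0 + E) ∂(volume : Measure Ω)

/-- The boundary integral `∫_{∂Iₙ^ω} (x−xₙ)·σ(ψ_E + Ex, Σ_E)ν`. -/
def bdryMoment (S : Setting d Ω) (E : Mat d) (ψ : V d → V d) (Sp : V d → ℝ)
    (ω : Ω) (n : ℕ) : ℝ :=
  ∫ x in sphere (S.xp n ω) 1,
    ∑ i, (x i - S.xp n ω i) *
      mulv (stress (fun y => ψ y + mulv E y) Sp x) (x - S.xp n ω) i ∂μH[((d:ℝ) - 1)]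

/-- `b̄ ∈ 𝕄₀^sym` with `b̄ : E = (1/d) 𝔼[Σₙ (𝟙_{Iₙ}/|Iₙ|) ∫_{∂Iₙ} (x−xₙ)·σ(ψ_E+Ex,Σ_E)ν]`. -/
def IsEffb (S : Setting d Ω) (ψ : Mat d → Ω → V d → V d)
    (Sp : Mat d → Ω → V d → ℝ) (bbar : Mat d) : Prop :=
  IsSymTF bbar ∧ ∀ E : Mat d, IsSymTF E →
    matInner bbar E = (d:ℝ)⁻¹ *
      ∫ ω, (∑' n : ℕ, (ball (S.xp n ω) 1).indicator
        (fun _ => (volume (ball (0:V d) 1)).toReal⁻¹ * bdryMoment S E (ψ E ω) (Sp E ω) ω n)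
        (0:V d)) ∂(volume : Measure Ω)

/-- `(ū, P̄)` is a weak solution of the homogenized Stokes problem
`−div(2 B̄ D(ū)) + ∇P̄ = (1−λ) f`, `div ū = 0` in `U`, `ū ∈ H¹₀(U)^d`, `∫_U P̄ = 0`. -/
structure IsHomSol (U : Set (V d)) (f : V d → V d) (Bbar : Mat d → Mat d)
    (lam : ℝ) (ub : V d → V d) (Pb : V d → ℝ) : Prop where
  mem_u : MemLp ub 2 (volume.restrict U)
  mem_grad : ∀ i j, MemLp (fun x => gradM ub x i j) 2 (volume.restrict U)
  zero_out : ∀ x ∉ U, ub x = 0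
  div_zero : ∀ᵐ x ∂(volume.restrict U), divg ub x = 0
  mem_P : MemLp Pb 2 (volume.restrict U)
  P_avg : ∫ x in U, Pb x = 0
  weak_form : ∀ φ : V d → V d, ContDiff ℝ Cinf φ → HasCompactSupport φ → tsupport φ ⊆ U →
      (∫ x in U, matInner ((2:ℝ) • Bbar (symGrad ub x)) (symGrad φ x))
        - (∫ x in U, Pb x * divg φ x)
        = (1 - lam) * ∫ x in U, ∑ i, f x i * φ x i

/-- Weak convergence to `0` in `L²(A)` as `ε ↓ 0` of a family of scalar functions. -/
def WeakL2Zero (A : Set (V d)) (F : ℝ → V d → ℝ) : Prop :=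
  ∀ g : V d → ℝ, MemLp g 2 (volume.restrict A) →
    Tendsto (fun ε => ∫ x in A, F ε x * g x) (𝓝[>] (0:ℝ)) (𝓝 (0:ℝ))

-- auxiliary development
def qf (x : V d) : ℝ := ∑ k, (x k)^2

def sf (E : Mat d) (x : V d) : ℝ := ∑ k, x k * mulv E x k

def uu (a b : ℝ → ℝ) (E : Mat d) (x : V d) : V d :=
  (-(a (qf x))) • mulv E x + (b (qf x) * sf E x) • x

def csum (c : Fin d → ℝ) : V d →L[ℝ] ℝ := ∑ k, c k • (EuclideanSpace.proj k : V d →L[ℝ] ℝ)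

lemma csum_apply (c : Fin d → ℝ) (v : V d) : csum c v = ∑ k, c k * v k := by
  simp [csum]

lemma csum_ebasis (c : Fin d → ℝ) (j : Fin d) : csum c (ebasis d j) = c j := by
  simp [csum_apply, ebasis, EuclideanSpace.single_apply]

lemma proj_ebasis (i j : Fin d) :
    (EuclideanSpace.proj i : V d →L[ℝ] ℝ) (ebasis d j) = if i = j then 1 else 0 := by
  simp [ebasis, EuclideanSpace.single_apply]

lemma mulv_apply (E : Mat d) (x : V d) (i : Fin d) :
    mulv E x i = ∑ k, E i k * x k := by
  simp [mulv, toV, Matrix.mulVec, dotProduct]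

lemma hasFDerivAt_qf (x : V d) :
    HasFDerivAt (qf (d := d)) (csum (fun k => 2 * x k)) x := by
  have : ∀ k : Fin d, HasFDerivAt (fun y : V d => (y k)^2)
      ((2 * x k) • (EuclideanSpace.proj k : V d →L[ℝ] ℝ)) x := by
    intro k
    have h := ((EuclideanSpace.proj k : V d →L[ℝ] ℝ).hasFDerivAt (x := x)).mul
      ((EuclideanSpace.proj k : V d →L[ℝ] ℝ).hasFDerivAt (x := x))
    have hc : ((2:ℝ) * x k) • (EuclideanSpace.proj k : V d →L[ℝ] ℝ)
        = (EuclideanSpace.proj k : V d →L[ℝ] ℝ) x • (EuclideanSpace.proj k : V d →L[ℝ] ℝ)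
          + (EuclideanSpace.proj k : V d →L[ℝ] ℝ) x • (EuclideanSpace.proj k : V d →L[ℝ] ℝ) := by
      rw [two_mul, add_smul]; rfl
    rw [hc]
    simp only [pow_two]
    exact h
  have h := HasFDerivAt.fun_sum (u := Finset.univ)
    (fun k _ => this k)
  exact h

lemma hasFDerivAt_mulv (E : Mat d) (i : Fin d) (x : V d) :
    HasFDerivAt (fun y : V d => mulv E y i) (csum (fun k => E i k)) x := by
  have : ∀ k : Fin d, HasFDerivAt (fun y : V d => E i k * y k)
      ((E i k) • (EuclideanSpace.proj k : V d →L[ℝ] ℝ)) x := by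
    intro k
    exact ((EuclideanSpace.proj k : V d →L[ℝ] ℝ).hasFDerivAt (x := x)).const_mul _
  have h := HasFDerivAt.fun_sum (u := Finset.univ) (fun k _ => this k)
  have e : (fun y : V d => mulv E y i) = fun y : V d => ∑ k, E i k * y k := by
    funext y; rw [mulv_apply]
  rw [e]
  simpa [csum] using h

lemma hasFDerivAt_sf (E : Mat d) (x : V d) :
    HasFDerivAt (sf E) (csum (fun k => mulv E x k + mulv Eᵀ x k)) x := by
  have hk : ∀ k : Fin d, HasFDerivAt (fun y : V d => y k * mulv E y k)
      ((x k) • csum (fun l => E k l) + (mulv E x k) • (EuclideanSpace.proj k : V d →L[ℝ] ℝ)) x := by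
    intro k
    exact ((EuclideanSpace.proj k : V d →L[ℝ] ℝ).hasFDerivAt (x := x)).mul (hasFDerivAt_mulv E k x)
  have h := HasFDerivAt.fun_sum (u := Finset.univ) (fun k _ => hk k)
  have e : (∑ k, ((x k) • csum (fun l => E k l) + (mulv E x k) • (EuclideanSpace.proj k : V d →L[ℝ] ℝ)))
      = csum (fun k => mulv E x k + mulv Eᵀ x k) := by
    ext v
    simp only [ContinuousLinearMap.sum_apply, ContinuousLinearMap.add_apply,
      ContinuousLinearMap.smul_apply, csum_apply, smul_eq_mul, Finset.sum_add_distrib,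
      Finset.mul_sum, add_mul]
    rw [add_comm]
    congr 1
    rw [Finset.sum_comm]
    apply Finset.sum_congr rfl; intro k _
    rw [mulv_apply]
    rw [Finset.sum_mul]
    apply Finset.sum_congr rfl; intro l _
    simp [Matrix.transpose_apply]
    ring
  rw [← e]
  exact h

lemma uu_apply (a b : ℝ → ℝ) (E : Mat d) (y : V d) (i : Fin d) :
    uu a b E y i = -(a (qf y) * mulv E y i) + (b (qf y) * sf E y) * y i := by
  simp [uu]

lemma hasFDerivAt_uui (a b : ℝ → ℝ) (E : Mat d) (x : V d) (i : Fin d)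
    (ha : DifferentiableAt ℝ a (qf x)) (hb : DifferentiableAt ℝ b (qf x)) :
    HasFDerivAt (fun y => uu a b E y i)
      (-((a (qf x)) • csum (fun k => E i k) + (mulv E x i) • (deriv a (qf x) • csum (fun k => 2 * x k)))
       + ((b (qf x) * sf E x) • (EuclideanSpace.proj i : V d →L[ℝ] ℝ)
          + (x i) • ((b (qf x)) • csum (fun k => mulv E x k + mulv Eᵀ x k)
                     + (sf E x) • (deriv b (qf x) • csum (fun k => 2 * x k))))) x := by
  have e : (fun y => uu a b E y i)
      = fun y => -(a (qf y) * mulv E y i) + (b (qf y) * sf E y) * y i := by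
    funext y; rw [uu_apply]
  rw [e]
  have haq : HasFDerivAt (fun y : V d => a (qf y)) (deriv a (qf x) • csum (fun k => 2 * x k)) x :=
    (ha.hasDerivAt).comp_hasFDerivAt x (hasFDerivAt_qf x)
  have hbq : HasFDerivAt (fun y : V d => b (qf y)) (deriv b (qf x) • csum (fun k => 2 * x k)) x :=
    (hb.hasDerivAt).comp_hasFDerivAt x (hasFDerivAt_qf x)
  exact ((haq.mul (hasFDerivAt_mulv E i x)).neg).add
    (((hbq.mul (hasFDerivAt_sf E x)).mul ((EuclideanSpace.proj i : V d →L[ℝ] ℝ).hasFDerivAt)))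

def GG (a b : ℝ → ℝ) (E : Mat d) (x : V d) (i j : Fin d) : ℝ :=
  -(a (qf x) * E i j + mulv E x i * (deriv a (qf x) * (2 * x j)))
  + ((b (qf x) * sf E x) * (if i = j then 1 else 0)
     + x i * (b (qf x) * (mulv E x j + mulv Eᵀ x j) + sf E x * (deriv b (qf x) * (2 * x j))))

lemma gradM_uu (a b : ℝ → ℝ) (E : Mat d) (x : V d)
    (ha : DifferentiableAt ℝ a (qf x)) (hb : DifferentiableAt ℝ b (qf x)) (i j : Fin d) :
    gradM (uu a b E) x i j = GG a b E x i j := by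
  have h := (hasFDerivAt_uui a b E x i ha hb).fderiv
  show pd (fun y => uu a b E y i) x j = _
  rw [pd, h]
  simp only [ContinuousLinearMap.add_apply, ContinuousLinearMap.neg_apply,
    ContinuousLinearMap.smul_apply, csum_ebasis, proj_ebasis, smul_eq_mul, GG]

lemma sf_transpose (E : Mat d) (x : V d) : ∑ i, x i * mulv Eᵀ x i = sf E x := by
  simp only [sf, mulv_apply, Matrix.transpose_apply, Finset.mul_sum]
  rw [Finset.sum_comm]
  apply Finset.sum_congr rfl; intro k _
  apply Finset.sum_congr rfl; intro l _
  ring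

lemma divg_uu (a b : ℝ → ℝ) (E : Mat d) (hE : E.trace = 0) (x : V d)
    (ha : DifferentiableAt ℝ a (qf x)) (hb : DifferentiableAt ℝ b (qf x))
    (hid : 2 * deriv a (qf x) = 2 * deriv b (qf x) * qf x + ((d:ℝ)+2) * b (qf x)) :
    divg (uu a b E) x = 0 := by
  have h1 : divg (uu a b E) x = ∑ i, GG a b E x i i := by
    rw [divg, Matrix.trace]
    apply Finset.sum_congr rfl
    intro i _
    exact gradM_uu a b E x ha hb i i
  rw [h1]
  have h2 : ∀ i : Fin d, GG a b E x i i
      = -(a (qf x)) * E i i + ((-(2 * deriv a (qf x))) * (x i * mulv E x i)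
        + (b (qf x) * sf E x + (b (qf x) * (x i * mulv E x i)
        + (b (qf x) * (x i * mulv Eᵀ x i) + (2 * deriv b (qf x) * sf E x) * (x i * x i))))) := by
    intro i; simp only [GG]; rw [if_true]; ring
  rw [Finset.sum_congr rfl (fun i _ => h2 i)]
  simp only [Finset.sum_add_distrib, ← Finset.mul_sum]
  have e1 : ∑ i, x i * mulv E x i = sf E x := rfl
  have e2 : ∑ i, x i * mulv Eᵀ x i = sf E x := sf_transpose E x
  have e3 : ∑ i, x i * x i = qf x := by
    rw [qf]; apply Finset.sum_congr rfl; intro i _; rw [pow_two]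
  have e4 : ∑ i : Fin d, E i i = 0 := hE
  have e5 : ∑ _i : Fin d, sf E x = (d:ℝ) * sf E x := by
    simp [Finset.sum_const, Finset.card_univ, nsmul_eq_mul]
  rw [e1, e2, e3, e4, e5]
  linear_combination (-(sf E x)) * hid

lemma qf_eq_norm (x : V d) : qf x = ‖x‖^2 := by
  rw [PiLp.norm_sq_eq_of_L2]
  apply Finset.sum_congr rfl; intro i _
  rw [Real.norm_eq_abs, sq_abs]

lemma qf_nonneg (x : V d) : 0 ≤ qf x := Finset.sum_nonneg fun i _ => sq_nonneg _

lemma uu_eq_on (a b : ℝ → ℝ) (E : Mat d) (x : V d)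
    (haval : a (qf x) = 1) (hbval : b (qf x) = 0) : uu a b E x = -(mulv E x) := by
  rw [uu, haval, hbval]
  simp

lemma uu_zero (a b : ℝ → ℝ) (E : Mat d) (x : V d)
    (ha0 : a (qf x) = 0) (hb0 : b (qf x) = 0) : uu a b E x = 0 := by
  rw [uu, ha0, hb0]
  simp

lemma contDiff_qf : ContDiff ℝ Cinf (qf (d := d)) := by
  apply ContDiff.sum
  intro k _
  exact ((EuclideanSpace.proj k : V d →L[ℝ] ℝ).contDiff).pow 2

lemma contDiff_mulvi (E : Mat d) (i : Fin d) : ContDiff ℝ Cinf (fun x : V d => mulv E x i) := by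
  have e : (fun x : V d => mulv E x i) = fun x : V d => ∑ k, E i k * x k := by
    funext x; rw [mulv_apply]
  rw [e]
  apply ContDiff.sum
  intro k _
  exact ((EuclideanSpace.proj k : V d →L[ℝ] ℝ).contDiff).const_smul (E i k)

lemma contDiff_sf (E : Mat d) : ContDiff ℝ Cinf (sf E) := by
  apply ContDiff.sum
  intro k _
  exact ((EuclideanSpace.proj k : V d →L[ℝ] ℝ).contDiff).mul (contDiff_mulvi E k)

lemma contDiff_uu (a b : ℝ → ℝ) (E : Mat d)
    (ha : ContDiff ℝ Cinf a) (hb : ContDiff ℝ Cinf b) : ContDiff ℝ Cinf (uu a b E) := by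
  rw [contDiff_euclidean]
  intro i
  have e : (fun x : V d => uu a b E x i)
      = fun x => -(a (qf x) * mulv E x i) + (b (qf x) * sf E x) * x i := by
    funext x; rw [uu_apply]
  rw [e]
  exact (((ha.comp contDiff_qf).mul (contDiff_mulvi E i)).neg).add
    (((hb.comp contDiff_qf).mul (contDiff_sf E)).mul
      (EuclideanSpace.proj i : V d →L[ℝ] ℝ).contDiff)

lemma continuous_GG (a b : ℝ → ℝ) (E : Mat d)
    (ha : Continuous a) (ha' : Continuous (deriv a))
    (hb : Continuous b) (hb' : Continuous (deriv b)) (i j : Fin d) :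
    Continuous (fun x : V d => GG a b E x i j) := by
  have hq : Continuous (qf (d := d)) := contDiff_qf.continuous
  have hm : ∀ l, Continuous (fun x : V d => mulv E x l) := fun l => (contDiff_mulvi E l).continuous
  have hmt : ∀ l, Continuous (fun x : V d => mulv Eᵀ x l) :=
    fun l => (contDiff_mulvi Eᵀ l).continuous
  have hs : Continuous (sf E) := (contDiff_sf E).continuous
  have hx : ∀ l, Continuous (fun x : V d => x l) :=
    fun l => (EuclideanSpace.proj l : V d →L[ℝ] ℝ).continuous
  unfold GG
  exact ((((ha.comp hq).mul continuous_const).add ((hm i).mul ((ha'.comp hq).mul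
    (continuous_const.mul (hx j))))).neg).add ((((hb.comp hq).mul hs).mul continuous_const).add
    ((hx i).mul (((hb.comp hq).mul ((hm j).add (hmt j))).add
      (hs.mul ((hb'.comp hq).mul (continuous_const.mul (hx j)))))))

lemma GG_zero (a b : ℝ → ℝ) (E : Mat d) (x : V d)
    (h : ∀ r, 2 ≤ r → a r = 0 ∧ b r = 0 ∧ deriv a r = 0 ∧ deriv b r = 0)
    (hx : 2 ≤ qf x) (i j : Fin d) : GG a b E x i j = 0 := by
  obtain ⟨h1, h2, h3, h4⟩ := h _ hx
  simp [GG, h1, h2, h3, h4]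

lemma one_le_Cinf : (1 : WithTop ℕ∞) ≤ Cinf := by
  rw [Cinf]
  exact_mod_cast (le_top : (1:ℕ∞) ≤ ⊤)

lemma Cinf_ne_zero : Cinf ≠ 0 := ne_of_gt (lt_of_lt_of_le zero_lt_one one_le_Cinf)

section Bump

variable (θ : ℝ → ℝ)

/-- `a` profile. -/
def aF (d : ℕ) : ℝ → ℝ := fun r => θ r + ((2/(d:ℝ)) * deriv θ r) * r

/-- `b` profile. -/
def bF (d : ℕ) : ℝ → ℝ := fun r => (2/(d:ℝ)) * deriv θ r

lemma contDiff_derivθ (hθ : ContDiff ℝ Cinf θ) : ContDiff ℝ Cinf (deriv θ) := (contDiff_infty_iff_deriv.mp hθ).2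

lemma contDiff_aF (hθ : ContDiff ℝ Cinf θ) : ContDiff ℝ Cinf (aF θ d) :=
  hθ.add ((((contDiff_derivθ θ hθ).const_smul ((2:ℝ)/d)).mul contDiff_id))

lemma contDiff_bF (hθ : ContDiff ℝ Cinf θ) : ContDiff ℝ Cinf (bF θ d) := (contDiff_derivθ θ hθ).const_smul ((2:ℝ)/d)

lemma deriv_aF (hθ : ContDiff ℝ Cinf θ) (r : ℝ) :
    deriv (aF θ d) r = deriv θ r
      + (((2/(d:ℝ)) * deriv (deriv θ) r) * r + ((2/(d:ℝ)) * deriv θ r) * 1) := by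
  have h1 : HasDerivAt θ (deriv θ r) r :=
    (hθ.differentiable Cinf_ne_zero).differentiableAt.hasDerivAt
  have h2 : HasDerivAt (deriv θ) (deriv (deriv θ) r) r :=
    ((contDiff_derivθ θ hθ).differentiable
      Cinf_ne_zero).differentiableAt.hasDerivAt
  exact (h1.add ((h2.const_mul ((2:ℝ)/d)).mul (hasDerivAt_id r))).deriv

lemma deriv_bF (hθ : ContDiff ℝ Cinf θ) (r : ℝ) : deriv (bF θ d) r = (2/(d:ℝ)) * deriv (deriv θ) r := by
  have h2 : HasDerivAt (deriv θ) (deriv (deriv θ) r) r :=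
    ((contDiff_derivθ θ hθ).differentiable
      Cinf_ne_zero).differentiableAt.hasDerivAt
  exact (h2.const_mul ((2:ℝ)/d)).deriv

lemma hid_aF (hθ : ContDiff ℝ Cinf θ) (hd : (d:ℝ) ≠ 0) (r : ℝ) :
    2 * deriv (aF θ d) r = 2 * deriv (bF θ d) r * r + ((d:ℝ)+2) * bF θ d r := by
  rw [deriv_aF θ hθ, deriv_bF θ hθ, bF]
  field_simp
  ring

end Bump

section BumpVal

variable {δ : ℝ} {f : ContDiffBump (0:ℝ)}

lemma θ_one (hIn : f.rIn = 1) {r : ℝ} (h0 : 0 ≤ r) (h1 : r < 1) : (⇑f) r = 1 := by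
  apply f.one_of_mem_closedBall
  rw [mem_closedBall, Real.dist_eq, sub_zero, hIn, abs_of_nonneg h0]
  linarith

lemma θ_deriv_zero (hIn : f.rIn = 1) {r : ℝ} (h0 : 0 ≤ r) (h1 : r < 1) : deriv (⇑f) r = 0 := by
  have h : (⇑f) =ᶠ[nhds r] (fun _ => 1) := by
    apply f.eventuallyEq_one_of_mem_ball
    rw [mem_ball, Real.dist_eq, sub_zero, hIn, abs_of_nonneg h0]
    exact h1
  rw [h.deriv_eq]
  exact deriv_const _ _

lemma θ_zero (hOut : f.rOut = 1 + δ) {r : ℝ} (h : 1 + δ < |r|) : (⇑f) r = 0 := by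
  apply f.zero_of_le_dist
  rw [Real.dist_eq, sub_zero, hOut]
  exact le_of_lt h

lemma θ_ev_zero (hOut : f.rOut = 1 + δ) {r : ℝ} (h : 1 + δ < |r|) :
    (⇑f) =ᶠ[nhds r] (fun _ => 0) := by
  have hopen : IsOpen {s : ℝ | 1 + δ < |s|} := isOpen_lt continuous_const continuous_abs
  filter_upwards [hopen.mem_nhds h] with s hs
  exact θ_zero hOut hs

lemma θ_deriv_zero' (hOut : f.rOut = 1 + δ) {r : ℝ} (h : 1 + δ < |r|) : deriv (⇑f) r = 0 := by
  rw [(θ_ev_zero hOut h).deriv_eq]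
  exact deriv_const _ _

lemma aF_one (hIn : f.rIn = 1) {r : ℝ} (h0 : 0 ≤ r) (h1 : r < 1) : aF (⇑f) d r = 1 := by
  rw [aF, θ_one hIn h0 h1, θ_deriv_zero hIn h0 h1]
  ring

lemma bF_zero (hIn : f.rIn = 1) {r : ℝ} (h0 : 0 ≤ r) (h1 : r < 1) : bF (⇑f) d r = 0 := by
  rw [bF, θ_deriv_zero hIn h0 h1]
  ring

lemma aF_ev_zero (hOut : f.rOut = 1 + δ) {r : ℝ} (h : 1 + δ < |r|) :
    (aF (⇑f) d) =ᶠ[nhds r] (fun _ => 0) := by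
  have hopen : IsOpen {s : ℝ | 1 + δ < |s|} := isOpen_lt continuous_const continuous_abs
  filter_upwards [hopen.mem_nhds h] with s hs
  rw [aF, θ_zero hOut hs, θ_deriv_zero' hOut hs]
  ring

lemma bF_ev_zero (hOut : f.rOut = 1 + δ) {r : ℝ} (h : 1 + δ < |r|) :
    (bF (⇑f) d) =ᶠ[nhds r] (fun _ => 0) := by
  have hopen : IsOpen {s : ℝ | 1 + δ < |s|} := isOpen_lt continuous_const continuous_abs
  filter_upwards [hopen.mem_nhds h] with s hs
  rw [bF, θ_deriv_zero' hOut hs]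
  ring

lemma aF_zero (hOut : f.rOut = 1 + δ) {r : ℝ} (h : 1 + δ < |r|) : aF (⇑f) d r = 0 :=
  (aF_ev_zero hOut h).self_of_nhds

lemma bF_zero' (hOut : f.rOut = 1 + δ) {r : ℝ} (h : 1 + δ < |r|) : bF (⇑f) d r = 0 :=
  (bF_ev_zero hOut h).self_of_nhds

lemma deriv_aF_zero (hOut : f.rOut = 1 + δ) {r : ℝ} (h : 1 + δ < |r|) :
    deriv (aF (⇑f) d) r = 0 := by
  rw [(aF_ev_zero hOut h).deriv_eq]; exact deriv_const _ _

lemma deriv_bF_zero (hOut : f.rOut = 1 + δ) {r : ℝ} (h : 1 + δ < |r|) :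
    deriv (bF (⇑f) d) r = 0 := by
  rw [(bF_ev_zero hOut h).deriv_eq]; exact deriv_const _ _

lemma ab_far_zero (hOut : f.rOut = 1 + δ) (hδ1 : δ < 1) : ∀ r : ℝ, 2 ≤ r →
    aF (⇑f) d r = 0 ∧ bF (⇑f) d r = 0 ∧ deriv (aF (⇑f) d) r = 0 ∧ deriv (bF (⇑f) d) r = 0 := by
  intro r hr
  have h : 1 + δ < |r| := by
    rw [abs_of_nonneg (by linarith)]
    linarith
  exact ⟨aF_zero hOut h, bF_zero' hOut h, deriv_aF_zero hOut h, deriv_bF_zero hOut h⟩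

lemma hasCompactSupport_aF (hOut : f.rOut = 1 + δ) : HasCompactSupport (aF (⇑f) d) := by
  apply HasCompactSupport.intro (isCompact_closedBall (0:ℝ) (1+δ))
  intro r hr
  apply aF_zero hOut
  rw [mem_closedBall, Real.dist_eq, sub_zero, not_le] at hr
  exact hr

lemma hasCompactSupport_bF (hOut : f.rOut = 1 + δ) : HasCompactSupport (bF (⇑f) d) := by
  apply HasCompactSupport.intro (isCompact_closedBall (0:ℝ) (1+δ))
  intro r hr
  apply bF_zero' hOut
  rw [mem_closedBall, Real.dist_eq, sub_zero, not_le] at hr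
  exact hr

end BumpVal

section Bound

lemma mulv_bound (E : Mat d) (x : V d) (T : ℝ) (hT : 0 ≤ T)
    (hE : ∀ k l, |E k l| ≤ T) (hx : ∀ k, |x k| ≤ 2) (l : Fin d) :
    |mulv E x l| ≤ 2 * d * T := by
  rw [mulv_apply]
  calc |∑ k, E l k * x k| ≤ ∑ k, |E l k * x k| := Finset.abs_sum_le_sum_abs _ _
    _ ≤ ∑ _k : Fin d, T * 2 := by
        apply Finset.sum_le_sum
        intro k _
        rw [abs_mul]
        exact mul_le_mul (hE l k) (hx k) (abs_nonneg _) hT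
    _ = 2 * d * T := by
        simp [Finset.sum_const, Finset.card_univ]
        ring

lemma sf_bound (E : Mat d) (x : V d) (T : ℝ) (hT : 0 ≤ T)
    (hE : ∀ k l, |E k l| ≤ T) (hx : ∀ k, |x k| ≤ 2) :
    |sf E x| ≤ 4 * d^2 * T := by
  calc |∑ k, x k * mulv E x k| ≤ ∑ k, |x k * mulv E x k| := Finset.abs_sum_le_sum_abs _ _
    _ ≤ ∑ _k : Fin d, 2 * (2 * d * T) := by
        apply Finset.sum_le_sum
        intro k _
        rw [abs_mul]
        exact mul_le_mul (hx k) (mulv_bound E x T hT hE hx k) (abs_nonneg _) (by norm_num)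
    _ = 4 * d^2 * T := by
        simp [Finset.sum_const, Finset.card_univ]
        ring

lemma GG_bound (a b : ℝ → ℝ) (E : Mat d) (x : V d) (Ma T : ℝ)
    (hMa1 : 1 ≤ Ma)
    (hba : ∀ r, |a r| ≤ Ma) (hba' : ∀ r, |deriv a r| ≤ Ma)
    (hbb : ∀ r, |b r| ≤ Ma) (hbb' : ∀ r, |deriv b r| ≤ Ma)
    (hT : 0 ≤ T) (hE : ∀ k l, |E k l| ≤ T) (hx : ∀ k, |x k| ≤ 2) (i j : Fin d) :
    |GG a b E x i j| ≤ 53 * d^2 * Ma * T := by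
  have hMa0 : (0:ℝ) ≤ Ma := le_trans zero_le_one hMa1
  have hd1 : (1:ℝ) ≤ (d:ℝ) ∨ d = 0 := by
    rcases Nat.eq_zero_or_pos d with h | h
    · exact Or.inr h
    · exact Or.inl (by exact_mod_cast h)
  have hm := mulv_bound E x T hT hE hx
  have hmt : ∀ l, |mulv Eᵀ x l| ≤ 2 * d * T := by
    apply mulv_bound Eᵀ x T hT _ hx
    intro k l
    rw [Matrix.transpose_apply]
    exact hE l k
  have hs := sf_bound E x T hT hE hx
  have hmd : (0:ℝ) ≤ 2 * d * T := by positivity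
  have h1 : |a (qf x) * E i j| ≤ Ma * T := by
    rw [abs_mul]; exact mul_le_mul (hba _) (hE i j) (abs_nonneg _) hMa0
  have h2 : |mulv E x i * (deriv a (qf x) * (2 * x j))| ≤ (2*d*T) * (Ma * (2*2)) := by
    rw [abs_mul, abs_mul, abs_mul, abs_two]
    gcongr
    · exact hm i
    · exact hba' _
    · exact hx j
  have h3 : |b (qf x) * sf E x * (if i = j then (1:ℝ) else 0)| ≤ Ma * (4*d^2*T) := by
    rw [abs_mul]
    have : |(if i = j then (1:ℝ) else 0)| ≤ 1 := by
      split <;> simp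
    calc |b (qf x) * sf E x| * |(if i = j then (1:ℝ) else 0)|
        ≤ |b (qf x) * sf E x| * 1 := mul_le_mul le_rfl this (abs_nonneg _) (abs_nonneg _)
      _ = |b (qf x)| * |sf E x| := by rw [mul_one, abs_mul]
      _ ≤ Ma * (4*d^2*T) := mul_le_mul (hbb _) hs (abs_nonneg _) hMa0
  have h4 : |x i * (b (qf x) * (mulv E x j + mulv Eᵀ x j)
      + sf E x * (deriv b (qf x) * (2 * x j)))|
      ≤ 2 * (Ma * (2*d*T + 2*d*T) + (4*d^2*T) * (Ma * (2*2))) := by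
    rw [abs_mul]
    apply mul_le_mul (hx i) _ (abs_nonneg _) (by norm_num)
    calc |b (qf x) * (mulv E x j + mulv Eᵀ x j) + sf E x * (deriv b (qf x) * (2 * x j))|
        ≤ |b (qf x) * (mulv E x j + mulv Eᵀ x j)| + |sf E x * (deriv b (qf x) * (2 * x j))| :=
          abs_add_le _ _
      _ ≤ Ma * (2*d*T + 2*d*T) + (4*d^2*T) * (Ma * (2*2)) := by
          apply add_le_add
          · rw [abs_mul]
            apply mul_le_mul (hbb _) _ (abs_nonneg _) hMa0
            calc |mulv E x j + mulv Eᵀ x j| ≤ |mulv E x j| + |mulv Eᵀ x j| := abs_add_le _ _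
              _ ≤ 2*d*T + 2*d*T := add_le_add (hm j) (hmt j)
          · rw [abs_mul, abs_mul, abs_mul, abs_two]
            gcongr
            · exact hbb' _
            · exact hx j
  have htot : |GG a b E x i j| ≤ Ma * T + (2*d*T) * (Ma * (2*2)) + Ma * (4*d^2*T)
      + 2 * (Ma * (2*d*T + 2*d*T) + (4*d^2*T) * (Ma * (2*2))) := by
    rw [GG]
    calc |(-(a (qf x) * E i j + mulv E x i * (deriv a (qf x) * (2 * x j))))
          + ((b (qf x) * sf E x) * (if i = j then (1:ℝ) else 0)
             + x i * (b (qf x) * (mulv E x j + mulv Eᵀ x j)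
               + sf E x * (deriv b (qf x) * (2 * x j))))|
        ≤ |(-(a (qf x) * E i j + mulv E x i * (deriv a (qf x) * (2 * x j))))|
          + |((b (qf x) * sf E x) * (if i = j then (1:ℝ) else 0)
             + x i * (b (qf x) * (mulv E x j + mulv Eᵀ x j)
               + sf E x * (deriv b (qf x) * (2 * x j))))| := abs_add_le _ _
      _ ≤ (|a (qf x) * E i j| + |mulv E x i * (deriv a (qf x) * (2 * x j))|)
          + (|(b (qf x) * sf E x) * (if i = j then (1:ℝ) else 0)|
             + |x i * (b (qf x) * (mulv E x j + mulv Eᵀ x j)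
               + sf E x * (deriv b (qf x) * (2 * x j)))|) := by
          apply add_le_add
          · rw [abs_neg]; exact abs_add_le _ _
          · exact abs_add_le _ _
      _ ≤ Ma * T + (2*d*T) * (Ma * (2*2)) + Ma * (4*d^2*T)
          + 2 * (Ma * (2*d*T + 2*d*T) + (4*d^2*T) * (Ma * (2*2))) := by
          have := add_le_add (add_le_add h1 h2) (add_le_add h3 h4)
          linarith
  rcases hd1 with hd1 | hd0
  · calc |GG a b E x i j| ≤ _ := htot
      _ ≤ 53 * d^2 * Ma * T := by nlinarith [mul_nonneg hMa0 hT, sq_nonneg ((d:ℝ) - 1)]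
  · subst hd0
    exact Fin.elim0 i

end Bound

lemma mnormSq_nonneg (A : Mat d) : 0 ≤ mnormSq A := by
  show 0 ≤ ∑ i, ∑ j, A i j * A i j
  exact Finset.sum_nonneg fun i _ => Finset.sum_nonneg fun j _ => mul_self_nonneg _

set_option maxHeartbeats 2000000 in
/-- For every trace-free `d×d` matrix `E` and every `δ ∈ (0,1)`,
there is a divergence-free vector field `u_E ∈ H¹₀(B_{1+δ/2})^d` equal to `−Ex`
on the unit ball `B`, with `‖∇u_E‖_{L²(B_{1+δ/2})} ≤ C(d,δ) |E|`. -/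
theorem stmt8
    {d : ℕ} (hd : 2 ≤ d) (δ : ℝ) (hδ : 0 < δ ∧ δ < 1) :
    ∃ C : ℝ, 0 < C ∧ ∀ E : Mat d, E.trace = 0 →
      ∃ u : V d → V d,
        (∀ x ∉ ball (0:V d) (1 + δ/2), u x = 0) ∧
        (∀ x ∈ ball (0:V d) 1, u x = -(mulv E x)) ∧
        MemLp u 2 (volume.restrict (ball (0:V d) (1 + δ/2))) ∧
        (∀ i j, MemLp (fun x => gradM u x i j) 2
            (volume.restrict (ball (0:V d) (1 + δ/2)))) ∧
        (∀ χ : V d → ℝ, ContDiff ℝ Cinf χ → HasCompactSupport χ →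
          ∀ i j, (∫ x, u x i * pd χ x j) = - ∫ x, gradM u x i j * χ x) ∧
        (∀ᵐ x ∂(volume : Measure (V d)), x ∈ ball (0:V d) (1 + δ/2) → divg u x = 0) ∧
        (∫ x in ball (0:V d) (1 + δ/2), mnormSq (gradM u x)) ≤ C * mnormSq E := by
  obtain ⟨hδ0, hδ1⟩ := hδ
  have hdR : (2:ℝ) ≤ (d:ℝ) := by exact_mod_cast hd
  have hd0 : (d:ℝ) ≠ 0 := by linarith
  -- the bump profile
  set f : ContDiffBump (0:ℝ) := ⟨1, 1+δ, one_pos, by linarith⟩ with hfdef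
  have hIn : f.rIn = 1 := rfl
  have hOut : f.rOut = 1 + δ := rfl
  have hθ : ContDiff ℝ Cinf (⇑f) := f.contDiff
  set a : ℝ → ℝ := aF (⇑f) d with hadef
  set b : ℝ → ℝ := bF (⇑f) d with hbdef
  have hCa : ContDiff ℝ Cinf a := contDiff_aF (⇑f) hθ
  have hCb : ContDiff ℝ Cinf b := contDiff_bF (⇑f) hθ
  have hda : Differentiable ℝ a := hCa.differentiable Cinf_ne_zero
  have hdb : Differentiable ℝ b := hCb.differentiable Cinf_ne_zero
  have hcsa : HasCompactSupport a := hasCompactSupport_aF hOut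
  have hcsb : HasCompactSupport b := hasCompactSupport_bF hOut
  have hca' : Continuous (deriv a) := (contDiff_derivθ a hCa).continuous
  have hcb' : Continuous (deriv b) := (contDiff_derivθ b hCb).continuous
  have hfar : ∀ r : ℝ, 2 ≤ r → a r = 0 ∧ b r = 0 ∧ deriv a r = 0 ∧ deriv b r = 0 :=
    ab_far_zero hOut hδ1
  -- global bounds
  obtain ⟨Ca, hCab⟩ := hCa.continuous.bounded_above_of_compact_support hcsa
  obtain ⟨Cb, hCbb⟩ := hCb.continuous.bounded_above_of_compact_support hcsb
  obtain ⟨Ca', hCab'⟩ := hca'.bounded_above_of_compact_support hcsa.deriv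
  obtain ⟨Cb', hCbb'⟩ := hcb'.bounded_above_of_compact_support hcsb.deriv
  set Ma : ℝ := max 1 (max (max Ca Ca') (max Cb Cb')) with hMadef
  have hMa1 : 1 ≤ Ma := le_max_left _ _
  have hba : ∀ r, |a r| ≤ Ma := fun r => le_trans (by rw [← Real.norm_eq_abs]; exact hCab r)
    (le_trans (le_max_left _ _) (le_trans (le_max_left _ _) (le_max_right _ _)))
  have hba' : ∀ r, |deriv a r| ≤ Ma := fun r => le_trans
    (by rw [← Real.norm_eq_abs]; exact hCab' r)
    (le_trans (le_max_right _ _) (le_trans (le_max_left _ _) (le_max_right _ _)))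
  have hbb : ∀ r, |b r| ≤ Ma := fun r => le_trans (by rw [← Real.norm_eq_abs]; exact hCbb r)
    (le_trans (le_max_left _ _) (le_trans (le_max_right _ _) (le_max_right _ _)))
  have hbb' : ∀ r, |deriv b r| ≤ Ma := fun r => le_trans
    (by rw [← Real.norm_eq_abs]; exact hCbb' r)
    (le_trans (le_max_right _ _) (le_trans (le_max_right _ _) (le_max_right _ _)))
  set K : ℝ := 53 * (d:ℝ)^2 * Ma with hKdef
  set C : ℝ := (volume (ball (0:V d) (1 + δ/2))).toReal * ((d:ℝ)^2 * K^2) + 1 with hCdef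
  have hMa0 : 0 ≤ Ma := le_trans zero_le_one hMa1
  have hC : 0 < C := by
    have h1 : 0 ≤ (volume (ball (0:V d) (1 + δ/2))).toReal := ENNReal.toReal_nonneg
    have h2 : 0 ≤ (d:ℝ)^2 * K^2 := by positivity
    rw [hCdef]
    positivity
  refine ⟨C, hC, ?_⟩
  intro E hE
  refine ⟨uu a b E, ?_, ?_, ?_, ?_, ?_, ?_, ?_⟩
  -- (1) zero outside
  · intro x hx
    rw [mem_ball, dist_zero_right, not_lt] at hx
    have hq : 1 + δ < qf x := by
      rw [qf_eq_norm]
      nlinarith [norm_nonneg x]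
    have habs : 1 + δ < |qf x| := by
      rw [abs_of_nonneg (qf_nonneg x)]; exact hq
    exact uu_zero a b E x (aF_zero hOut habs) (bF_zero' hOut habs)
  -- (2) equals -Ex on B
  · intro x hx
    rw [mem_ball, dist_zero_right] at hx
    have hq1 : qf x < 1 := by
      rw [qf_eq_norm]
      nlinarith [norm_nonneg x]
    exact uu_eq_on a b E x (aF_one hIn (qf_nonneg x) hq1) (bF_zero hIn (qf_nonneg x) hq1)
  -- compact support facts
  · have hu_cont : Continuous (uu a b E) := (contDiff_uu a b E hCa hCb).continuous
    have hu_supp : HasCompactSupport (uu a b E) := by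
      apply HasCompactSupport.intro (isCompact_closedBall (0:V d) 2)
      intro x hx
      rw [mem_closedBall, dist_zero_right, not_le] at hx
      have hq : (2:ℝ) ≤ qf x := by
        rw [qf_eq_norm]; nlinarith
      exact uu_zero a b E x (hfar _ hq).1 (hfar _ hq).2.1
    exact (hu_cont.memLp_of_hasCompactSupport hu_supp).restrict _
  -- (4) gradient entries in L²
  · intro i j
    have hGeq : (fun x => gradM (uu a b E) x i j) = fun x => GG a b E x i j :=
      funext fun x => gradM_uu a b E x (hda _) (hdb _) i j
    rw [hGeq]
    have hGc : Continuous (fun x : V d => GG a b E x i j) :=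
      continuous_GG a b E hCa.continuous hca' hCb.continuous hcb' i j
    have hGs : HasCompactSupport (fun x : V d => GG a b E x i j) := by
      apply HasCompactSupport.intro (isCompact_closedBall (0:V d) 2)
      intro x hx
      rw [mem_closedBall, dist_zero_right, not_le] at hx
      have hq : (2:ℝ) ≤ qf x := by
        rw [qf_eq_norm]; nlinarith
      exact GG_zero a b E x hfar hq i j
    exact (hGc.memLp_of_hasCompactSupport hGs).restrict _
  -- (5) integration by parts
  · intro χ hχ hχs i j
    have hui_cd : ContDiff ℝ Cinf (fun x : V d => uu a b E x i) :=
      contDiff_euclidean.mp (contDiff_uu a b E hCa hCb) i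
    have hui_diff : Differentiable ℝ (fun x : V d => uu a b E x i) :=
      hui_cd.differentiable Cinf_ne_zero
    have hui_supp : HasCompactSupport (fun x : V d => uu a b E x i) := by
      apply HasCompactSupport.intro (isCompact_closedBall (0:V d) 2)
      intro x hx
      rw [mem_closedBall, dist_zero_right, not_le] at hx
      have hq : (2:ℝ) ≤ qf x := by
        rw [qf_eq_norm]; nlinarith
      rw [uu_zero a b E x (hfar _ hq).1 (hfar _ hq).2.1]
      rfl
    have hχ_diff : Differentiable ℝ χ := hχ.differentiable Cinf_ne_zero
    have hfd_eq : (fun x : V d => fderiv ℝ (fun y => uu a b E y i) x (ebasis d j))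
        = fun x => GG a b E x i j :=
      funext fun x => gradM_uu a b E x (hda _) (hdb _) i j
    have hGc : Continuous (fun x : V d => GG a b E x i j) :=
      continuous_GG a b E hCa.continuous hca' hCb.continuous hcb' i j
    have hGs : HasCompactSupport (fun x : V d => GG a b E x i j) := by
      apply HasCompactSupport.intro (isCompact_closedBall (0:V d) 2)
      intro x hx
      rw [mem_closedBall, dist_zero_right, not_le] at hx
      have hq : (2:ℝ) ≤ qf x := by
        rw [qf_eq_norm]; nlinarith
      exact GG_zero a b E x hfar hq i j
    have h1 : Integrable (fun x : V d =>
        fderiv ℝ (fun y => uu a b E y i) x (ebasis d j) * χ x) volume := by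
      have heq : (fun x : V d => fderiv ℝ (fun y => uu a b E y i) x (ebasis d j) * χ x)
          = fun x => GG a b E x i j * χ x := funext fun x => by rw [congrFun hfd_eq x]
      rw [heq]
      exact (hGc.mul hχ.continuous).integrable_of_hasCompactSupport (hGs.mul_right)
    have h2 : Integrable (fun x : V d => uu a b E x i * fderiv ℝ χ x (ebasis d j)) volume := by
      apply Continuous.integrable_of_hasCompactSupport
      · exact (hui_cd.continuous).mul
          ((hχ.continuous_fderiv Cinf_ne_zero).clm_apply continuous_const)
      · exact hui_supp.mul_right
    have h3 : Integrable (fun x : V d => uu a b E x i * χ x) volume :=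
      ((hui_cd.continuous).mul hχ.continuous).integrable_of_hasCompactSupport
        (hui_supp.mul_right)
    have key := integral_mul_fderiv_eq_neg_fderiv_mul_of_integrable
      (f := fun x : V d => uu a b E x i) (g := χ) (v := ebasis d j) h1 h2 h3 (fun x _ => hui_diff x) (fun x _ => hχ_diff x)
    simp only [pd, gradM, Matrix.of_apply]
    exact key
  -- (6) divergence free
  · apply Filter.Eventually.of_forall
    intro x _
    exact divg_uu a b E hE x (hda _) (hdb _)
      (hid_aF (⇑f) hθ hd0 (qf x))
  -- (7) energy bound
  · set T : ℝ := Real.sqrt (mnormSq E) with hTdef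
    have hT0 : 0 ≤ T := Real.sqrt_nonneg _
    have hTsq : T^2 = mnormSq E := Real.sq_sqrt (mnormSq_nonneg E)
    have hEb : ∀ k l, |E k l| ≤ T := by
      intro k l
      rw [← Real.sqrt_sq_eq_abs]
      apply Real.sqrt_le_sqrt
      rw [pow_two]
      show E k l * E k l ≤ mnormSq E
      calc E k l * E k l ≤ ∑ j, E k j * E k j :=
            Finset.single_le_sum (f := fun j => E k j * E k j)
              (fun j _ => mul_self_nonneg _) (Finset.mem_univ l)
        _ ≤ ∑ i, ∑ j, E i j * E i j :=
            Finset.single_le_sum (f := fun i => ∑ j, E i j * E i j)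
              (fun i _ => Finset.sum_nonneg fun j _ => mul_self_nonneg _) (Finset.mem_univ k)
    have hpoint : ∀ x ∈ ball (0:V d) (1 + δ/2),
        mnormSq (gradM (uu a b E) x) ≤ (d:ℝ)^2 * K^2 * mnormSq E := by
      intro x hx
      rw [mem_ball, dist_zero_right] at hx
      have hxk : ∀ k, |x k| ≤ 2 := by
        intro k
        have h1 : (x k)^2 ≤ qf x := Finset.single_le_sum
          (f := fun l => (x l)^2) (fun l _ => sq_nonneg _) (Finset.mem_univ k)
        have h2 : (x k)^2 ≤ 2^2 := by
          rw [qf_eq_norm] at h1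
          nlinarith [norm_nonneg x]
        calc |x k| = Real.sqrt ((x k)^2) := (Real.sqrt_sq_eq_abs _).symm
          _ ≤ Real.sqrt (2^2) := Real.sqrt_le_sqrt h2
          _ = 2 := by rw [Real.sqrt_sq]; norm_num
      have hGb : ∀ i j, |GG a b E x i j| ≤ K * T := by
        intro i j
        have := GG_bound a b E x Ma T hMa1 hba hba' hbb hbb' hT0 hEb hxk i j
        calc |GG a b E x i j| ≤ 53 * d^2 * Ma * T := this
          _ = K * T := by rw [hKdef]
      have hsq : ∀ i j, GG a b E x i j * GG a b E x i j ≤ (K*T) * (K*T) := by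
        intro i j
        calc GG a b E x i j * GG a b E x i j = |GG a b E x i j| * |GG a b E x i j| :=
              (abs_mul_abs_self _).symm
          _ ≤ (K*T) * (K*T) := mul_le_mul (hGb i j) (hGb i j) (abs_nonneg _)
              (le_trans (abs_nonneg _) (hGb i j))
      have hGeq : ∀ i j, gradM (uu a b E) x i j = GG a b E x i j :=
        fun i j => gradM_uu a b E x (hda _) (hdb _) i j
      calc mnormSq (gradM (uu a b E) x)
          = ∑ i, ∑ j, GG a b E x i j * GG a b E x i j := by
            rw [mnormSq, matInner]
            exact Finset.sum_congr rfl fun i _ => Finset.sum_congr rfl fun j _ => by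
              rw [hGeq i j]
        _ ≤ ∑ _i : Fin d, ∑ _j : Fin d, (K*T) * (K*T) :=
            Finset.sum_le_sum fun i _ => Finset.sum_le_sum fun j _ => hsq i j
        _ = (d:ℝ)^2 * K^2 * mnormSq E := by
            simp [Finset.sum_const, Finset.card_univ]
            rw [← hTsq]
            ring
    have hint : IntegrableOn (fun x => mnormSq (gradM (uu a b E) x))
        (ball (0:V d) (1 + δ/2)) volume := by
      have hGeq : (fun x => mnormSq (gradM (uu a b E) x))
          = fun x => ∑ i, ∑ j, GG a b E x i j * GG a b E x i j := by
        funext x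
        rw [mnormSq, matInner]
        exact Finset.sum_congr rfl fun i _ => Finset.sum_congr rfl fun j _ => by
          rw [gradM_uu a b E x (hda _) (hdb _) i j]
      rw [hGeq]
      have hc : Continuous (fun x : V d => ∑ i, ∑ j, GG a b E x i j * GG a b E x i j) := by
        apply continuous_finset_sum
        intro i _
        apply continuous_finset_sum
        intro j _
        exact (continuous_GG a b E hCa.continuous hca' hCb.continuous hcb' i j).mul
          (continuous_GG a b E hCa.continuous hca' hCb.continuous hcb' i j)
      exact (hc.continuousOn.integrableOn_compact
        (isCompact_closedBall _ _)).mono_set ball_subset_closedBall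
    calc (∫ x in ball (0:V d) (1 + δ/2), mnormSq (gradM (uu a b E) x))
        ≤ ∫ _x in ball (0:V d) (1 + δ/2), (d:ℝ)^2 * K^2 * mnormSq E := by
          apply setIntegral_mono_on hint _ measurableSet_ball hpoint
          exact integrableOn_const measure_ball_lt_top.ne
      _ = (volume (ball (0:V d) (1 + δ/2))).toReal * ((d:ℝ)^2 * K^2 * mnormSq E) := by
          rw [setIntegral_const]
          rw [smul_eq_mul]
          rfl
      _ ≤ C * mnormSq E := by
          rw [hCdef]
          have h1 : 0 ≤ mnormSq E := mnormSq_nonneg E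
          nlinarith [ENNReal.toReal_nonneg
            (a := volume (ball (0:V d) (1 + δ/2)))]

end StokesSuspension
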